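/- Let Q be an NQPR in dimension d ≥ 2 and let U be a d×d unitary matrix. Then Re tr(Q_j · U · Q_k · U†) ≥ 0 for all indices j, k if and only if U belongs to the symmetry group of Q, i.e., there exists a permutation σ of the index set {1, …, d²} such that U Q_j U† = Q_{σ(j)} for all j. -/

import Mathlib

open Matrix

/-- Auxiliary: real-linear embedding of self-adjoint complex matrices into `Fin d × Fin d → ℝ`. -/
noncomputable def hermEmbed (d : ℕ) :
    selfAdjoint (Matrix (Fin d) (Fin d) ℂ) →ₗ[ℝ] (Fin d × Fin d → ℝ) where
  toFun A p := if p.1 < p.2 then ((A : Matrix (Fin d) (Fin d) ℂ) p.1 p.2).re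
    else if p.2 < p.1 then ((A : Matrix (Fin d) (Fin d) ℂ) p.1 p.2).im
    else ((A : Matrix (Fin d) (Fin d) ℂ) p.1 p.2).re
  map_add' A B := by
    funext p
    by_cases h1 : p.1 < p.2 <;> by_cases h2 : p.2 < p.1 <;>
      simp [h1, h2, Matrix.add_apply]
  map_smul' r A := by
    funext p
    by_cases h1 : p.1 < p.2 <;> by_cases h2 : p.2 < p.1 <;>
      simp [h1, h2, Matrix.smul_apply, Complex.smul_re, Complex.smul_im]

lemma hermEmbed_injective (d : ℕ) : Function.Injective (hermEmbed d) := by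
  intro A B hAB
  have key : ∀ C : selfAdjoint (Matrix (Fin d) (Fin d) ℂ),
      hermEmbed d C = 0 → C = 0 := by
    intro C hC
    have hherm : (C : Matrix (Fin d) (Fin d) ℂ)ᴴ = (C : Matrix (Fin d) (Fin d) ℂ) := C.2
    have happ : ∀ a b : Fin d, (C : Matrix (Fin d) (Fin d) ℂ) b a =
        starRingEnd ℂ ((C : Matrix (Fin d) (Fin d) ℂ) a b) := by
      intro a b
      conv_lhs => rw [← hherm]
      rfl
    have hfun : ∀ p : Fin d × Fin d, hermEmbed d C p = 0 := fun p => by rw [hC]; rfl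
    have hz : (C : Matrix (Fin d) (Fin d) ℂ) = 0 := by
      ext a b
      show (C : Matrix (Fin d) (Fin d) ℂ) a b = 0
      rcases lt_trichotomy a b with h | h | h
      · have h1 := hfun (a, b)
        have h2 := hfun (b, a)
        simp only [hermEmbed, LinearMap.coe_mk, AddHom.coe_mk, h, if_pos,
          lt_asymm h, if_neg, if_false] at h1 h2
        rw [happ a b] at h2
        simp only [Complex.conj_im, neg_eq_zero] at h2
        exact Complex.ext h1 h2
      · subst h
        have h1 := hfun (a, a)
        simp only [hermEmbed, LinearMap.coe_mk, AddHom.coe_mk, lt_irrefl, if_neg,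
          not_false_iff, if_false] at h1
        have h2 : ((C : Matrix (Fin d) (Fin d) ℂ) a a).im = 0 := by
          have := congrArg Complex.im (happ a a)
          simp only [Complex.conj_im] at this
          linarith
        exact Complex.ext h1 h2
      · have h1 := hfun (b, a)
        have h2 := hfun (a, b)
        simp only [hermEmbed, LinearMap.coe_mk, AddHom.coe_mk, h, if_pos,
          lt_asymm h, if_neg, if_false] at h1 h2
        have h1' : ((C : Matrix (Fin d) (Fin d) ℂ) a b).re = 0 := by
          rw [happ b a, Complex.conj_re]; exact h1
        exact Complex.ext h1' h2
    exact Subtype.ext hz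
  have h0 : hermEmbed d (A - B) = 0 := by rw [map_sub, hAB, sub_self]
  exact sub_eq_zero.mp (key _ h0)

set_option maxHeartbeats 1000000 in
/-- Theorem 5: For an NQPR `Q` in dimension `d ≥ 2` and a `d×d` unitary `U`, the
representation of `U` is entrywise nonnegative, i.e. `Re tr(Q j · U Q k U†) ≥ 0` for all `j, k`,
iff `U` belongs to the symmetry group of `Q`, i.e. there is a permutation `σ` of the indices
with `U Q j U† = Q (σ j)` for all `j`. -/
theorem stmt_16 (d : ℕ) (hd : 2 ≤ d)
    (Q : Fin (d ^ 2) → Matrix (Fin d) (Fin d) ℂ)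
    (hherm : ∀ j, (Q j).IsHermitian)
    (htr : ∀ j, (Q j).trace = 1)
    (hpair : ∀ j k, (Q j * Q k).trace = if j = k then (d : ℂ) else 0)
    (hsum : ∑ j, Q j = (d : ℂ) • (1 : Matrix (Fin d) (Fin d) ℂ))
    (U : Matrix (Fin d) (Fin d) ℂ) (hU : U * Uᴴ = 1) (hU' : Uᴴ * U = 1) :
    (∀ j k, 0 ≤ ((Q j * (U * Q k * Uᴴ)).trace).re) ↔
      ∃ σ : Equiv.Perm (Fin (d ^ 2)), ∀ j, U * Q j * Uᴴ = Q (σ j) := by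
  have hd0 : (0 : ℝ) < d := by
    have : 0 < d := by omega
    exact_mod_cast this
  have hdC : (d : ℂ) ≠ 0 := by simp only [ne_eq, Nat.cast_eq_zero]; omega
  constructor
  · intro hpos
    set R : Fin (d ^ 2) → Matrix (Fin d) (Fin d) ℂ := fun k => U * Q k * Uᴴ with hRdef
    have hRherm : ∀ k, (R k).IsHermitian := by
      intro k
      show (U * Q k * Uᴴ)ᴴ = U * Q k * Uᴴ
      rw [conjTranspose_mul, conjTranspose_mul, conjTranspose_conjTranspose,
        (hherm k).eq, Matrix.mul_assoc]
    have hconj_mul : ∀ A B : Matrix (Fin d) (Fin d) ℂ,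
        (U * A * Uᴴ) * (U * B * Uᴴ) = U * (A * B) * Uᴴ := by
      intro A B
      simp only [Matrix.mul_assoc]
      rw [← Matrix.mul_assoc Uᴴ U (B * Uᴴ), hU', Matrix.one_mul]
    have htrconj : ∀ A : Matrix (Fin d) (Fin d) ℂ, (U * A * Uᴴ).trace = A.trace := by
      intro A
      rw [Matrix.trace_mul_comm, ← Matrix.mul_assoc, hU', Matrix.one_mul]
    have hRtr : ∀ j k, (R j * R k).trace = (Q j * Q k).trace := by
      intro j k
      show ((U * Q j * Uᴴ) * (U * Q k * Uᴴ)).trace = _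
      rw [hconj_mul, htrconj]
    have hRsum : ∑ k, R k = (d : ℂ) • (1 : Matrix (Fin d) (Fin d) ℂ) := by
      show ∑ k, U * Q k * Uᴴ = _
      rw [← Finset.sum_mul, ← Finset.mul_sum, hsum, Matrix.mul_smul, Matrix.smul_mul,
        Matrix.mul_one, hU]
    -- linear algebra: decompose R in terms of Q
    haveI : NeZero (d ^ 2) := ⟨by positivity⟩
    haveI : Module.Finite ℝ (selfAdjoint (Matrix (Fin d) (Fin d) ℂ)) :=
      Module.Finite.of_injective (hermEmbed d) (hermEmbed_injective d)
    set q : Fin (d ^ 2) → selfAdjoint (Matrix (Fin d) (Fin d) ℂ) :=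
      fun l => ⟨Q l, (hherm l)⟩ with hq
    have hli : LinearIndependent ℝ q := by
      rw [Fintype.linearIndependent_iff]
      intro g hg i
      have hg' : ∑ l, g l • Q l = 0 := by
        have := congrArg Subtype.val hg
        simpa using this
      have h3 : ∑ l, g l • (Q l * Q i).trace = 0 := by
        have : ((∑ l, g l • Q l) * Q i).trace = 0 := by rw [hg', Matrix.zero_mul, trace_zero]
        rw [Finset.sum_mul, trace_sum] at this
        rw [← this]
        exact Finset.sum_congr rfl fun l _ => by rw [smul_mul_assoc, trace_smul]
      simp only [hpair, smul_ite, smul_zero, Finset.sum_ite_eq', Finset.mem_univ,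
        if_pos] at h3
      have h4 : (g i : ℂ) * d = 0 := by rw [← Complex.real_smul]; exact h3
      rcases mul_eq_zero.mp h4 with h | h
      · exact_mod_cast h
      · exact absurd h hdC
    have hcard : Fintype.card (Fin (d ^ 2)) =
        Module.finrank ℝ (selfAdjoint (Matrix (Fin d) (Fin d) ℂ)) := by
      have h1 : Module.finrank ℝ (selfAdjoint (Matrix (Fin d) (Fin d) ℂ)) ≤ d ^ 2 := by
        have := LinearMap.finrank_le_finrank_of_injective (hermEmbed_injective d)
        rwa [Module.finrank_fintype_fun_eq_card, Fintype.card_prod, Fintype.card_fin, ← sq]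
          at this
      have h2 := hli.fintype_card_le_finrank
      rw [Fintype.card_fin] at h2 ⊢
      omega
    set b := basisOfLinearIndependentOfCardEqFinrank hli hcard with hb
    set c : Fin (d ^ 2) → Fin (d ^ 2) → ℝ :=
      fun j k => b.repr ⟨R k, (hRherm k)⟩ j with hc
    have hRdecomp : ∀ k, R k = ∑ l, c l k • Q l := by
      intro k
      have h1 := b.sum_repr ⟨R k, (hRherm k)⟩
      have h2 := congrArg Subtype.val h1
      rw [show ⇑b = q from coe_basisOfLinearIndependentOfCardEqFinrank hli hcard] at h2
      simpa [hc, hq] using h2.symm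
    -- trace formula
    have htrQR : ∀ j k, (Q j * R k).trace = (c j k : ℂ) * d := by
      intro j k
      rw [hRdecomp k, Finset.mul_sum, trace_sum]
      have : ∀ l, (Q j * (c l k • Q l)).trace = c l k • (Q j * Q l).trace := by
        intro l
        rw [mul_smul_comm, trace_smul]
      simp only [this, hpair, smul_ite, smul_zero, Finset.sum_ite_eq, Finset.sum_ite_eq',
        Finset.mem_univ, if_pos, Complex.real_smul]
    -- nonnegativity of coefficients
    have hc0 : ∀ j k, 0 ≤ c j k := by
      intro j k
      have h1 := hpos j k
      have h2 : ((Q j * R k).trace).re = c j k * d := by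
        rw [htrQR]
        simp
      rw [show (Q j * (U * Q k * Uᴴ)) = Q j * R k from rfl] at h1
      rw [h2] at h1
      nlinarith
    -- row sums
    have hrow : ∀ j, ∑ k, c j k = 1 := by
      intro j
      have h1 : ∑ k, (Q j * R k).trace = (d : ℂ) := by
        calc ∑ k, (Q j * R k).trace = (Q j * ∑ k, R k).trace := by
              rw [Finset.mul_sum, trace_sum]
          _ = (d : ℂ) := by
              rw [hRsum, Matrix.mul_smul, Matrix.mul_one, trace_smul, htr, smul_eq_mul,
                mul_one]
      have h2 : (∑ k, (c j k : ℂ)) * d = d := by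
        rw [Finset.sum_mul]
        calc ∑ k, (c j k : ℂ) * d = ∑ k, (Q j * R k).trace :=
              Finset.sum_congr rfl fun k _ => (htrQR j k).symm
          _ = d := h1
      have h3 : (∑ k, (c j k : ℂ)) = 1 := by
        field_simp at h2
        exact h2
      have h4 : ((∑ k, c j k : ℝ) : ℂ) = 1 := by push_cast; exact h3
      exact_mod_cast h4
    -- column sums of squares
    have hcol : ∀ k, ∑ j, (c j k) ^ 2 = 1 := by
      intro k
      have h1 : (R k * R k).trace = (d : ℂ) := by
        rw [hRtr, hpair, if_pos rfl]
      have h2 : (R k * R k).trace = (∑ j, ((c j k : ℂ)) ^ 2) * d := by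
        calc (R k * R k).trace = ∑ l, c l k • (R k * Q l).trace := by
              conv_lhs => rw [show R k * R k = R k * ∑ l, c l k • Q l from by
                rw [← hRdecomp k]]
              rw [Finset.mul_sum, trace_sum]
              exact Finset.sum_congr rfl fun l _ => by rw [mul_smul_comm, trace_smul]
          _ = ∑ l, ((c l k : ℂ)) ^ 2 * d := by
              refine Finset.sum_congr rfl fun l _ => ?_
              rw [trace_mul_comm, htrQR, Complex.real_smul]
              ring
          _ = (∑ j, ((c j k : ℂ)) ^ 2) * d := by rw [Finset.sum_mul]
      have h3 : (∑ j, ((c j k : ℂ)) ^ 2) = 1 := by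
        rw [h1] at h2
        field_simp at h2
        exact h2.symm
      have h4 : ((∑ j, (c j k) ^ 2 : ℝ) : ℂ) = 1 := by push_cast; exact h3
      exact_mod_cast h4
    -- c j k ≤ 1
    have hc1 : ∀ j k, c j k ≤ 1 := by
      intro j k
      have h1 : (c j k) ^ 2 ≤ 1 := by
        have := Finset.single_le_sum (f := fun j' => (c j' k) ^ 2)
          (fun i _ => sq_nonneg _) (Finset.mem_univ j)
        rw [hcol k] at this
        exact this
      nlinarith [hc0 j k]
    -- all entries are 0 or 1
    have hbool : ∀ j k, c j k = 0 ∨ c j k = 1 := by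
      have hsum1 : ∑ j, ∑ k, (c j k - (c j k) ^ 2) = 0 := by
        have e1 : ∑ j, ∑ k, c j k = (d ^ 2 : ℝ) := by
          rw [Finset.sum_congr rfl fun j _ => hrow j]
          simp
        have e2 : ∑ j, ∑ k, (c j k) ^ 2 = (d ^ 2 : ℝ) := by
          rw [Finset.sum_comm]
          rw [Finset.sum_congr rfl fun k _ => hcol k]
          simp
        simp only [Finset.sum_sub_distrib, e1, e2, sub_self]
      have hnn : ∀ j k, 0 ≤ c j k - (c j k) ^ 2 := by
        intro j k
        nlinarith [hc0 j k, hc1 j k]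
      have hz : ∀ j ∈ Finset.univ, ∀ k ∈ Finset.univ, c j k - (c j k) ^ 2 = 0 := by
        have houter := (Finset.sum_eq_zero_iff_of_nonneg
          (fun j _ => Finset.sum_nonneg fun k _ => hnn j k)).mp hsum1
        intro j hj k hk
        exact (Finset.sum_eq_zero_iff_of_nonneg (fun k _ => hnn j k)).mp (houter j hj) k hk
      intro j k
      have := hz j (Finset.mem_univ j) k (Finset.mem_univ k)
      have : c j k * (1 - c j k) = 0 := by nlinarith
      rcases mul_eq_zero.mp this with h | h
      · exact Or.inl h
      · exact Or.inr (by linarith)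
    -- column sums are 1 too
    have hcolsum : ∀ k, ∑ j, c j k = 1 := by
      intro k
      rw [← hcol k]
      refine Finset.sum_congr rfl fun j _ => ?_
      rcases hbool j k with h | h <;> rw [h] <;> ring
    -- unique 1 in each column
    have hexu : ∀ k, ∃! j, c j k = 1 := by
      intro k
      have hex : ∃ j, c j k = 1 := by
        by_contra hne
        push_neg at hne
        have : ∀ j, c j k = 0 := fun j => (hbool j k).resolve_right (hne j)
        have : ∑ j, c j k = 0 := Finset.sum_eq_zero fun j _ => this j
        rw [hcolsum k] at this
        norm_num at this
      obtain ⟨j, hj⟩ := hex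
      refine ⟨j, hj, fun j' hj' => ?_⟩
      by_contra hne
      have hsub : ({j', j} : Finset (Fin (d ^ 2))) ⊆ Finset.univ := Finset.subset_univ _
      have h2 : ∑ i ∈ ({j', j} : Finset (Fin (d ^ 2))), c i k ≤ ∑ i, c i k :=
        Finset.sum_le_sum_of_subset_of_nonneg hsub fun i _ _ => hc0 i k
      rw [Finset.sum_pair hne, hj, hj', hcolsum k] at h2
      norm_num at h2
    -- construct σ
    choose σ₀ hσ₀ hσ₀u using hexu
    have hcval : ∀ k l, c l k = if l = σ₀ k then 1 else 0 := by
      intro k l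
      by_cases h : l = σ₀ k
      · rw [if_pos h, h]; exact hσ₀ k
      · rw [if_neg h]
        rcases hbool l k with h0 | h1
        · exact h0
        · exact absurd (hσ₀u k l h1) h
    have hRQ : ∀ k, R k = Q (σ₀ k) := by
      intro k
      rw [hRdecomp k]
      rw [Finset.sum_congr rfl fun l _ => by rw [hcval k l]]
      simp [ite_smul]
    have hinj : Function.Injective σ₀ := by
      intro k k' hkk'
      by_contra hne
      have h1 : (R k * R k').trace = 0 := by rw [hRtr, hpair, if_neg hne]
      have h2 : (R k * R k').trace = (d : ℂ) := by
        rw [hRQ k, hRQ k', hkk', ← hRQ k', hRtr, hpair, if_pos rfl]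
      rw [h1] at h2
      exact hdC h2.symm
    refine ⟨Equiv.ofBijective σ₀ (Finite.injective_iff_bijective.mp hinj), fun j => ?_⟩
    show R j = Q _
    rw [hRQ j]
    rfl
  · rintro ⟨σ, hσ⟩ j k
    rw [hσ k, hpair]
    split
    · simp [hd0.le]
    · simp
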